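/- For any quadruple (α,β,γ,δ) ∈ ℕ⁴ and any k ∈ ℕ, the polynomial B̃#_{α,β,γ,δ} belongs to the ideal power I^k if and only if k ≤ α + β + γ + δ − max{α, β, γ+δ}; that is, the maximal k with B̃#_{α,β,γ,δ} ∈ I^k equals α + β + γ + δ − max{α, β, γ+δ}. Equivalently, B̃#_{α,β,γ,δ} ∈ I^k if and only if B#_{α,β,γ+δ} ∈ I^k. -/
import Mathlib


open MvPolynomial

/-- The ideal of bivariate real polynomials vanishing at the three points
`(−1,−1), (−1,1), (1,−1)`. -/
noncomputable def vI : Ideal (MvPolynomial (Fin 2) ℝ) where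
  carrier := {p | ∀ ε ∈ ({![-1, -1], ![-1, 1], ![1, -1]} : Set (Fin 2 → ℝ)), eval ε p = 0}
  zero_mem' := by intro ε _; simp
  add_mem' := by intro a b ha hb ε hε; simp [ha ε hε, hb ε hε]
  smul_mem' := by intro c p hp ε hε; simp [smul_eq_mul, hp ε hε]

/-- The normalized three-directional box spline symbol
`B#_{α,β,γ}(z₁,z₂) = ((1+z₁)/2)^α ((1+z₂)/2)^β ((1+z₁z₂)/2)^γ`. -/
noncomputable def Bs (α β γ : ℕ) : MvPolynomial (Fin 2) ℝ :=
  (C (1 / 2 : ℝ) * (1 + X 0)) ^ α * (C (1 / 2 : ℝ) * (1 + X 1)) ^ β *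
    (C (1 / 2 : ℝ) * (1 + X 0 * X 1)) ^ γ

/-- The polynomial version of the normalized four-directional box spline symbol,
`B̃#_{α,β,γ,δ}(z₁,z₂) = ((1+z₁)/2)^α ((1+z₂)/2)^β ((1+z₁z₂)/2)^γ ((z₁+z₂)/2)^δ`. -/
noncomputable def Bs4 (α β γ δ : ℕ) : MvPolynomial (Fin 2) ℝ :=
  Bs α β γ * (C (1 / 2 : ℝ) * (X 0 + X 1)) ^ δ

/-! ### Auxiliary machinery -/

/-- The (maximal) ideal of polynomials vanishing at a point. -/
noncomputable def Jpt (ε : Fin 2 → ℝ) : Ideal (MvPolynomial (Fin 2) ℝ) :=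
  RingHom.ker (eval ε)

lemma mem_vI {p} : p ∈ vI ↔
    ∀ ε ∈ ({![-1, -1], ![-1, 1], ![1, -1]} : Set (Fin 2 → ℝ)), eval ε p = 0 := Iff.rfl

lemma vI_eq : vI = Jpt ![-1,-1] ⊓ Jpt ![-1,1] ⊓ Jpt ![1,-1] := by
  ext p
  simp only [mem_vI, Ideal.mem_inf, Jpt, RingHom.mem_ker, Set.mem_insert_iff,
    Set.mem_singleton_iff]
  constructor
  · intro h; exact ⟨⟨h _ (Or.inl rfl), h _ (Or.inr (Or.inl rfl))⟩, h _ (Or.inr (Or.inr rfl))⟩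
  · rintro ⟨⟨h1, h2⟩, h3⟩ ε (rfl | rfl | rfl) <;> assumption

lemma sup_Jpt {ε ε' : Fin 2 → ℝ} (i : Fin 2) (h : ε i ≠ ε' i) : Jpt ε ⊔ Jpt ε' = ⊤ := by
  rw [Ideal.eq_top_iff_one]
  have h1 : (C ((ε' i - ε i)⁻¹) * (X i - C (ε i)) : MvPolynomial (Fin 2) ℝ) ∈ Jpt ε := by
    simp [Jpt, RingHom.mem_ker]
  have h2 : (-(C ((ε' i - ε i)⁻¹) * (X i - C (ε' i))) : MvPolynomial (Fin 2) ℝ) ∈ Jpt ε' := by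
    simp [Jpt, RingHom.mem_ker]
  have hs := Submodule.add_mem_sup h1 h2
  have heq : (C ((ε' i - ε i)⁻¹) * (X i - C (ε i)) : MvPolynomial (Fin 2) ℝ)
      + (-(C ((ε' i - ε i)⁻¹) * (X i - C (ε' i)))) = C ((ε' i - ε i)⁻¹ * (ε' i - ε i)) := by
    rw [C_mul, C_sub]; ring
  rwa [heq, inv_mul_cancel₀ (sub_ne_zero.mpr (Ne.symm h)), C_1] at hs

lemma vI_pow (k : ℕ) :
    vI ^ k = Jpt ![-1,-1] ^ k ⊓ Jpt ![-1,1] ^ k ⊓ Jpt ![1,-1] ^ k := by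
  have c12 : IsCoprime (Jpt ![-1,-1]) (Jpt ![-1,1]) :=
    Ideal.isCoprime_iff_sup_eq.mpr (sup_Jpt 1 (by norm_num))
  have c13 : IsCoprime (Jpt ![-1,-1]) (Jpt ![1,-1]) :=
    Ideal.isCoprime_iff_sup_eq.mpr (sup_Jpt 0 (by norm_num))
  have c23 : IsCoprime (Jpt ![-1,1]) (Jpt ![1,-1]) :=
    Ideal.isCoprime_iff_sup_eq.mpr (sup_Jpt 0 (by norm_num))
  have h123 : IsCoprime (Jpt ![-1,-1]) (Jpt ![-1,1] * Jpt ![1,-1]) := c12.mul_right c13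
  calc vI ^ k = (Jpt ![-1,-1] * (Jpt ![-1,1] * Jpt ![1,-1])) ^ k := by
        rw [vI_eq, inf_assoc, Ideal.inf_eq_mul_of_isCoprime c23,
          Ideal.inf_eq_mul_of_isCoprime h123]
    _ = Jpt ![-1,-1] ^ k * (Jpt ![-1,1] ^ k * Jpt ![1,-1] ^ k) := by rw [mul_pow, mul_pow]
    _ = Jpt ![-1,-1] ^ k ⊓ Jpt ![-1,1] ^ k ⊓ Jpt ![1,-1] ^ k := by
        rw [← mul_pow, ← Ideal.inf_eq_mul_of_isCoprime h123.pow, mul_pow,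
          ← Ideal.inf_eq_mul_of_isCoprime c23.pow, ← inf_assoc]

lemma prod3_mem_pow {R : Type*} [CommRing R] (I : Ideal R) {a b c : R}
    (ha : a ∈ I) (hb : b ∈ I) (hc : c ∈ I) (m n p k : ℕ) (h : k ≤ m + n + p) :
    a ^ m * b ^ n * c ^ p ∈ I ^ k := by
  refine Ideal.pow_le_pow_right h ?_
  rw [pow_add, pow_add]
  exact Ideal.mul_mem_mul (Ideal.mul_mem_mul (Ideal.pow_mem_pow ha m)
    (Ideal.pow_mem_pow hb n)) (Ideal.pow_mem_pow hc p)

lemma dvd_of_mem_pow (v : Fin 2 → Polynomial ℝ) (pt : Fin 2 → ℝ)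
    (hv : ∀ i, (v i).eval 0 = pt i)
    (hpt : pt ∈ ({![-1, -1], ![-1, 1], ![1, -1]} : Set (Fin 2 → ℝ)))
    {p : MvPolynomial (Fin 2) ℝ} {k : ℕ} (hp : p ∈ vI ^ k) :
    (Polynomial.X : Polynomial ℝ) ^ k ∣ eval₂Hom (Polynomial.C : ℝ →+* Polynomial ℝ) v p := by
  set ψ := eval₂Hom (Polynomial.C : ℝ →+* Polynomial ℝ) v with hψ
  have hmap : Ideal.map ψ vI ≤ Ideal.span {(Polynomial.X : Polynomial ℝ)} := by
    rw [Ideal.map_le_iff_le_comap]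
    intro q hq
    rw [Ideal.mem_comap, Ideal.mem_span_singleton, Polynomial.X_dvd_iff,
      Polynomial.coeff_zero_eq_eval_zero]
    have hcomp : Polynomial.eval 0 (ψ q) = eval pt q := by
      show Polynomial.evalRingHom 0 (eval₂ Polynomial.C v q) = _
      rw [eval₂_comp_left (Polynomial.evalRingHom 0)]
      have h1 : (Polynomial.evalRingHom (0:ℝ)).comp Polynomial.C = RingHom.id ℝ :=
        RingHom.ext fun a => by simp
      have h2 : (Polynomial.evalRingHom (0:ℝ)) ∘ v = pt := funext fun i => hv i
      rw [h1, h2, eval₂_id]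
    rw [hcomp]
    exact mem_vI.mp hq pt hpt
  have h1 : ψ p ∈ (Ideal.map ψ vI) ^ k := by
    rw [← Ideal.map_pow]; exact Ideal.mem_map_of_mem ψ hp
  have h2 := Ideal.pow_right_mono hmap k h1
  rwa [Ideal.span_singleton_pow, Ideal.mem_span_singleton] at h2

lemma le_of_X_pow_dvd {k N : ℕ} {r : Polynomial ℝ} (hr : r.eval 0 ≠ 0)
    (h : (Polynomial.X : Polynomial ℝ) ^ k ∣ Polynomial.X ^ N * r) : k ≤ N := by
  have hXr : ¬ ((Polynomial.X : Polynomial ℝ) ∣ r) := by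
    rw [Polynomial.X_dvd_iff, Polynomial.coeff_zero_eq_eval_zero]; exact hr
  have hd : (Polynomial.X : Polynomial ℝ) ^ k ∣ Polynomial.X ^ N :=
    (Polynomial.prime_X).pow_dvd_of_dvd_mul_right k hXr h
  have := Polynomial.natDegree_le_of_dvd hd (pow_ne_zero _ Polynomial.X_ne_zero)
  simpa using this

/-- The key characterization. -/
lemma Bs4_mem_iff (α β γ δ k : ℕ) :
    Bs4 α β γ δ ∈ vI ^ k ↔ (k ≤ α + β ∧ k ≤ α + γ + δ ∧ k ≤ β + γ + δ) := by
  constructor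
  · intro h
    refine ⟨?_, ?_, ?_⟩
    · -- substitute z₁ = t - 1, z₂ = t - 1 (point (-1,-1))
      have hd := dvd_of_mem_pow ![Polynomial.X - 1, Polynomial.X - 1] ![-1, -1]
        (by intro i; fin_cases i <;> simp) (by simp) h
      have himg : eval₂Hom (Polynomial.C : ℝ →+* Polynomial ℝ) ![Polynomial.X - 1, Polynomial.X - 1]
          (Bs4 α β γ δ) = Polynomial.X ^ (α + β) *
            ((Polynomial.C (1/2 : ℝ)) ^ α * (Polynomial.C (1/2 : ℝ)) ^ β *
             (Polynomial.C (1/2 : ℝ) * (1 + (Polynomial.X - 1) * (Polynomial.X - 1))) ^ γ *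
             (Polynomial.C (1/2 : ℝ) * ((Polynomial.X - 1) + (Polynomial.X - 1))) ^ δ) := by
        simp only [Bs4, Bs, map_mul, map_pow, map_add, map_one, coe_eval₂Hom, eval₂_C, eval₂_X,
          eval₂_mul, eval₂_one, eval₂_add, Matrix.cons_val_zero, Matrix.cons_val_one,
          Matrix.head_cons]
        ring
      rw [himg] at hd
      refine le_of_X_pow_dvd ?_ hd
      simp only [Polynomial.eval_mul, Polynomial.eval_pow, Polynomial.eval_C,
        Polynomial.eval_add, Polynomial.eval_one, Polynomial.eval_sub, Polynomial.eval_X]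
      norm_num
    · -- substitute z₁ = t - 1, z₂ = 1 (point (-1,1))
      have hd := dvd_of_mem_pow ![Polynomial.X - 1, 1] ![-1, 1]
        (by intro i; fin_cases i <;> simp) (by simp) h
      have himg : eval₂Hom (Polynomial.C : ℝ →+* Polynomial ℝ) ![Polynomial.X - 1, 1]
          (Bs4 α β γ δ) = Polynomial.X ^ (α + γ + δ) *
            ((Polynomial.C (1/2 : ℝ)) ^ α * (Polynomial.C (1/2 : ℝ) * (1 + 1)) ^ β *
             (Polynomial.C (1/2 : ℝ)) ^ γ * (Polynomial.C (1/2 : ℝ)) ^ δ) := by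
        simp only [Bs4, Bs, map_mul, map_pow, map_add, map_one, coe_eval₂Hom, eval₂_C, eval₂_X,
          eval₂_mul, eval₂_one, eval₂_add, Matrix.cons_val_zero, Matrix.cons_val_one,
          Matrix.head_cons]
        ring
      rw [himg] at hd
      refine le_of_X_pow_dvd ?_ hd
      simp only [Polynomial.eval_mul, Polynomial.eval_pow, Polynomial.eval_C,
        Polynomial.eval_add, Polynomial.eval_one]
      norm_num
    · -- substitute z₁ = 1, z₂ = t - 1 (point (1,-1))
      have hd := dvd_of_mem_pow ![1, Polynomial.X - 1] ![1, -1]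
        (by intro i; fin_cases i <;> simp) (by simp) h
      have himg : eval₂Hom (Polynomial.C : ℝ →+* Polynomial ℝ) ![1, Polynomial.X - 1]
          (Bs4 α β γ δ) = Polynomial.X ^ (β + γ + δ) *
            ((Polynomial.C (1/2 : ℝ) * (1 + 1)) ^ α * (Polynomial.C (1/2 : ℝ)) ^ β *
             (Polynomial.C (1/2 : ℝ)) ^ γ * (Polynomial.C (1/2 : ℝ)) ^ δ) := by
        simp only [Bs4, Bs, map_mul, map_pow, map_add, map_one, coe_eval₂Hom, eval₂_C, eval₂_X,
          eval₂_mul, eval₂_one, eval₂_add, Matrix.cons_val_zero, Matrix.cons_val_one,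
          Matrix.head_cons]
        ring
      rw [himg] at hd
      refine le_of_X_pow_dvd ?_ hd
      simp only [Polynomial.eval_mul, Polynomial.eval_pow, Polynomial.eval_C,
        Polynomial.eval_add, Polynomial.eval_one]
      norm_num
  · rintro ⟨h1, h2, h3⟩
    rw [vI_pow, Ideal.mem_inf, Ideal.mem_inf]
    have mA1 : (C (1 / 2 : ℝ) * (1 + X 0)) ∈ Jpt ![-1,-1] := by simp [Jpt, RingHom.mem_ker]
    have mB1 : (C (1 / 2 : ℝ) * (1 + X 1)) ∈ Jpt ![-1,-1] := by simp [Jpt, RingHom.mem_ker]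
    have mA2 : (C (1 / 2 : ℝ) * (1 + X 0)) ∈ Jpt ![-1,1] := by simp [Jpt, RingHom.mem_ker]
    have mC2 : (C (1 / 2 : ℝ) * (1 + X 0 * X 1)) ∈ Jpt ![-1,1] := by simp [Jpt, RingHom.mem_ker]
    have mD2 : (C (1 / 2 : ℝ) * (X 0 + X 1)) ∈ Jpt ![-1,1] := by simp [Jpt, RingHom.mem_ker]
    have mB3 : (C (1 / 2 : ℝ) * (1 + X 1)) ∈ Jpt ![1,-1] := by simp [Jpt, RingHom.mem_ker]
    have mC3 : (C (1 / 2 : ℝ) * (1 + X 0 * X 1)) ∈ Jpt ![1,-1] := by simp [Jpt, RingHom.mem_ker]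
    have mD3 : (C (1 / 2 : ℝ) * (X 0 + X 1)) ∈ Jpt ![1,-1] := by simp [Jpt, RingHom.mem_ker]
    refine ⟨⟨?_, ?_⟩, ?_⟩
    · have hrw : Bs4 α β γ δ =
          ((C (1 / 2 : ℝ) * (1 + X 0 * X 1)) ^ γ * (C (1 / 2 : ℝ) * (X 0 + X 1)) ^ δ) *
          ((C (1 / 2 : ℝ) * (1 + X 0)) ^ α * (C (1 / 2 : ℝ) * (1 + X 1)) ^ β *
            (0 : MvPolynomial (Fin 2) ℝ) ^ 0) := by
        unfold Bs4 Bs; ring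
      rw [hrw]
      exact Ideal.mul_mem_left _ _
        (prod3_mem_pow _ mA1 mB1 (zero_mem _) α β 0 k (by omega))
    · have hrw : Bs4 α β γ δ =
          ((C (1 / 2 : ℝ) * (1 + X 1)) ^ β) *
          ((C (1 / 2 : ℝ) * (1 + X 0)) ^ α * (C (1 / 2 : ℝ) * (1 + X 0 * X 1)) ^ γ *
            (C (1 / 2 : ℝ) * (X 0 + X 1)) ^ δ) := by
        unfold Bs4 Bs; ring
      rw [hrw]
      exact Ideal.mul_mem_left _ _ (prod3_mem_pow _ mA2 mC2 mD2 α γ δ k (by omega))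
    · have hrw : Bs4 α β γ δ =
          ((C (1 / 2 : ℝ) * (1 + X 0)) ^ α) *
          ((C (1 / 2 : ℝ) * (1 + X 1)) ^ β * (C (1 / 2 : ℝ) * (1 + X 0 * X 1)) ^ γ *
            (C (1 / 2 : ℝ) * (X 0 + X 1)) ^ δ) := by
        unfold Bs4 Bs; ring
      rw [hrw]
      exact Ideal.mul_mem_left _ _ (prod3_mem_pow _ mB3 mC3 mD3 β γ δ k (by omega))

/-- `B̃#_{α,β,γ,δ} ∈ I^k` iff `k ≤ α + β + γ + δ − max{α, β, γ+δ}` (so the maximal such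
`k` equals `α + β + γ + δ − max{α, β, γ+δ}`); equivalently, `B̃#_{α,β,γ,δ} ∈ I^k` iff
`B#_{α,β,γ+δ} ∈ I^k`. -/
theorem stmt_18 (α β γ δ k : ℕ) :
    (Bs4 α β γ δ ∈ vI ^ k ↔ k ≤ α + β + γ + δ - max α (max β (γ + δ))) ∧
    (Bs4 α β γ δ ∈ vI ^ k ↔ Bs α β (γ + δ) ∈ vI ^ k) := by
  have hBs : Bs α β (γ + δ) = Bs4 α β (γ + δ) 0 := by
    unfold Bs4; rw [pow_zero, mul_one]
  constructor
  · rw [Bs4_mem_iff]; omega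
  · rw [Bs4_mem_iff, hBs, Bs4_mem_iff]; omega
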